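/- Let m ≥ 1, M ∈ ℝ^{m×m}, and let Q ∈ ℝ^{m×m} be symmetric positive definite with Mᵀ Q + Q M = −I_m. Denote by λmax(Q) and λmin(Q) the largest and smallest eigenvalues of Q. If x : [0,∞) → ℝᵐ is differentiable with x'(t) = M x(t) for all t ≥ 0, then for all t ≥ 0, |x(t)|² ≤ (λmax(Q)/λmin(Q)) · |x(0)|² · e^{−t/λmax(Q)}, where |·| is the Euclidean norm on ℝᵐ. -/

import Mathlib

open Matrix Set


lemma dot_mulVec_left {m : ℕ} (M : Matrix (Fin m) (Fin m) ℝ) (a w : Fin m → ℝ) :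
    (M *ᵥ a) ⬝ᵥ w = a ⬝ᵥ (Mᵀ *ᵥ w) := by
  rw [dotProduct_mulVec, ← vecMul_transpose]

lemma quad_eq {m : ℕ} (Q : Matrix (Fin m) (Fin m) ℝ) (hH : Q.IsHermitian)
    (hsymm : Qᵀ = Q) (v : Fin m → ℝ) :
    v ⬝ᵥ Q *ᵥ v = ∑ i, hH.eigenvalues i *
      (((hH.eigenvectorBasis i : EuclideanSpace ℝ (Fin m)) : Fin m → ℝ) ⬝ᵥ v)^2 := by
  have h1 := hH.eigenvectorBasis.sum_inner_mul_inner
    (WithLp.toLp 2 (Q *ᵥ v : Fin m → ℝ) : EuclideanSpace ℝ (Fin m)) (WithLp.toLp 2 v : EuclideanSpace ℝ (Fin m))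
  simp only [PiLp.inner_apply, PiLp.toLp_apply, RCLike.inner_apply, starRingEnd_apply, star_trivial] at h1
  rw [show v ⬝ᵥ Q *ᵥ v = ∑ x, v x * (Q *ᵥ v) x from rfl, ← h1]
  refine Finset.sum_congr rfl fun i _ => ?_
  have h2 : (∑ j, hH.eigenvectorBasis i j * (Q *ᵥ v) j)
      = hH.eigenvalues i * ∑ j, hH.eigenvectorBasis i j * v j := by
    have c1 : (∑ j, hH.eigenvectorBasis i j * (Q *ᵥ v) j)
        = (⇑(hH.eigenvectorBasis i)) ⬝ᵥ (Q *ᵥ v) := rfl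
    have c2 : (⇑(hH.eigenvectorBasis i)) ⬝ᵥ (Q *ᵥ v)
        = (Q *ᵥ ⇑(hH.eigenvectorBasis i)) ⬝ᵥ v := by
      have vq := vecMul_transpose Q (⇑(hH.eigenvectorBasis i))
      rw [hsymm] at vq
      rw [dotProduct_mulVec, vq]
    rw [c1, c2, hH.mulVec_eigenvectorBasis, smul_dotProduct, smul_eq_mul]
    rfl
  rw [h2, show (∑ x, v x * hH.eigenvectorBasis i x) = ∑ x, hH.eigenvectorBasis i x * v x
      from Finset.sum_congr rfl fun j _ => mul_comm _ _,
    show (((hH.eigenvectorBasis i : EuclideanSpace ℝ (Fin m)) : Fin m → ℝ) ⬝ᵥ v)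
      = ∑ x, hH.eigenvectorBasis i x * v x from rfl]
  ring

lemma norm_eq {m : ℕ} (Q : Matrix (Fin m) (Fin m) ℝ) (hH : Q.IsHermitian)
    (v : Fin m → ℝ) :
    v ⬝ᵥ v = ∑ i,
      (((hH.eigenvectorBasis i : EuclideanSpace ℝ (Fin m)) : Fin m → ℝ) ⬝ᵥ v)^2 := by
  have h1 := hH.eigenvectorBasis.sum_inner_mul_inner
    (WithLp.toLp 2 v : EuclideanSpace ℝ (Fin m)) (WithLp.toLp 2 v : EuclideanSpace ℝ (Fin m))
  simp only [PiLp.inner_apply, PiLp.toLp_apply, RCLike.inner_apply, starRingEnd_apply, star_trivial] at h1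
  rw [show v ⬝ᵥ v = ∑ x, v x * v x from rfl, ← h1]
  refine Finset.sum_congr rfl fun i _ => ?_
  rw [show (((hH.eigenvectorBasis i : EuclideanSpace ℝ (Fin m)) : Fin m → ℝ) ⬝ᵥ v)
      = ∑ x, hH.eigenvectorBasis i x * v x from rfl,
    show (∑ x, v x * hH.eigenvectorBasis i x) = ∑ x, hH.eigenvectorBasis i x * v x
      from Finset.sum_congr rfl fun j _ => mul_comm _ _]
  ring

/-- Lyapunov decay estimate: if `Q` is symmetric positive definite with
`Mᵀ Q + Q M = −I` and `x' = M x` on `[0,∞)`, then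
`|x(t)|² ≤ (λmax(Q)/λmin(Q)) |x(0)|² e^{−t/λmax(Q)}` (Euclidean norm). -/
theorem lyapunov_decay_estimate
    (m : ℕ) (hm : 1 ≤ m) (M Q : Matrix (Fin m) (Fin m) ℝ)
    (hQsymm : Q.IsSymm) (hQ : Q.PosDef)
    (hLyap : Mᵀ * Q + Q * M = -(1 : Matrix (Fin m) (Fin m) ℝ))
    (lmax lmin : ℝ)
    (hlmax : IsGreatest {t : ℝ | ∃ v : Fin m → ℝ, v ≠ 0 ∧ Q.mulVec v = t • v} lmax)
    (hlmin : IsLeast {t : ℝ | ∃ v : Fin m → ℝ, v ≠ 0 ∧ Q.mulVec v = t • v} lmin)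
    (x : ℝ → Fin m → ℝ)
    (hx : ∀ t ∈ Ici (0:ℝ), HasDerivWithinAt x (M.mulVec (x t)) (Ici 0) t) :
    ∀ t ∈ Ici (0:ℝ),
      ∑ i, (x t i) ^ 2
        ≤ (lmax / lmin) * (∑ i, (x 0 i) ^ 2) * Real.exp (-(t / lmax)) := by
  have hQH : Q.IsHermitian := hQ.1
  have hsymm : Qᵀ = Q := hQsymm
  -- positivity of dot-square
  have hdotpos : ∀ v : Fin m → ℝ, v ≠ 0 → 0 < v ⬝ᵥ v := by
    intro v hv
    rcases Function.ne_iff.mp hv with ⟨i, hi⟩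
    have : (0:ℝ) < v i * v i := mul_self_pos.mpr (by simpa using hi)
    calc (0:ℝ) < v i * v i := this
      _ ≤ ∑ j, v j * v j := Finset.single_le_sum (fun j _ => mul_self_nonneg (v j)) (Finset.mem_univ i)
      _ = v ⬝ᵥ v := rfl
  -- every element of the eigenvalue set is positive
  have hSpos : ∀ t ∈ {t : ℝ | ∃ v : Fin m → ℝ, v ≠ 0 ∧ Q.mulVec v = t • v}, 0 < t := by
    rintro t ⟨v, hv0, hv⟩
    have h1 : 0 < v ⬝ᵥ Q *ᵥ v := by have := hQ.dotProduct_mulVec_pos hv0; rwa [star_trivial] at this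
    rw [hv, dotProduct_smul, smul_eq_mul] at h1
    nlinarith [hdotpos v hv0]
  have hlmaxpos : 0 < lmax := hSpos lmax hlmax.1
  have hlminpos : 0 < lmin := hSpos lmin hlmin.1
  -- eigenvalues lie in [lmin, lmax]
  have hmem : ∀ i, hQH.eigenvalues i ∈
      {t : ℝ | ∃ v : Fin m → ℝ, v ≠ 0 ∧ Q.mulVec v = t • v} := by
    intro i
    refine ⟨((hQH.eigenvectorBasis i : EuclideanSpace ℝ (Fin m)) : Fin m → ℝ), ?_, ?_⟩
    · exact fun h => hQH.eigenvectorBasis.orthonormal.ne_zero i (by ext j; simp [h])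
    · exact hQH.mulVec_eigenvectorBasis i
  -- Rayleigh bounds
  have hub : ∀ v : Fin m → ℝ, v ⬝ᵥ Q *ᵥ v ≤ lmax * (v ⬝ᵥ v) := by
    intro v
    rw [quad_eq Q hQH hsymm v, norm_eq Q hQH v, Finset.mul_sum]
    exact Finset.sum_le_sum fun i _ => by
      nlinarith [sq_nonneg (((hQH.eigenvectorBasis i : EuclideanSpace ℝ (Fin m)) : Fin m → ℝ) ⬝ᵥ v),
        hlmax.2 (hmem i)]
  have hlb : ∀ v : Fin m → ℝ, lmin * (v ⬝ᵥ v) ≤ v ⬝ᵥ Q *ᵥ v := by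
    intro v
    rw [quad_eq Q hQH hsymm v, norm_eq Q hQH v, Finset.mul_sum]
    exact Finset.sum_le_sum fun i _ => by
      nlinarith [sq_nonneg (((hQH.eigenvectorBasis i : EuclideanSpace ℝ (Fin m)) : Fin m → ℝ) ⬝ᵥ v),
        hlmin.2 (hmem i)]
  -- the Lyapunov function
  set V : ℝ → ℝ := fun t => x t ⬝ᵥ Q *ᵥ x t with hVdef
  -- derivative of V
  have hV : ∀ t ∈ Ici (0:ℝ), HasDerivWithinAt V (-(x t ⬝ᵥ x t)) (Ici 0) t := by
    intro t ht
    have hx' : ∀ i, HasDerivWithinAt (fun s => x s i) ((M *ᵥ x t) i) (Ici 0) t :=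
      fun i => (hasDerivWithinAt_pi.mp (hx t ht)) i
    have hQx : ∀ i, HasDerivWithinAt (fun s => (Q *ᵥ x s) i) ((Q *ᵥ (M *ᵥ x t)) i) (Ici 0) t := by
      intro i
      simp only [mulVec, dotProduct]
      exact HasDerivWithinAt.fun_sum fun j _ => (hx' j).const_mul (Q i j)
    have hsum : HasDerivWithinAt (fun s => ∑ i, x s i * (Q *ᵥ x s) i)
        (∑ i, ((M *ᵥ x t) i * (Q *ᵥ x t) i + x t i * (Q *ᵥ (M *ᵥ x t)) i)) (Ici 0) t :=
      HasDerivWithinAt.fun_sum fun i _ => (hx' i).mul (hQx i)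
    have key : (∑ i, ((M *ᵥ x t) i * (Q *ᵥ x t) i + x t i * (Q *ᵥ (M *ᵥ x t)) i))
        = -(x t ⬝ᵥ x t) := by
      rw [Finset.sum_add_distrib]
      have e1 : (∑ i, (M *ᵥ x t) i * (Q *ᵥ x t) i) = (M *ᵥ x t) ⬝ᵥ (Q *ᵥ x t) := rfl
      have e2 : (∑ i, x t i * (Q *ᵥ (M *ᵥ x t)) i) = x t ⬝ᵥ (Q *ᵥ (M *ᵥ x t)) := rfl
      rw [e1, e2, dot_mulVec_left, mulVec_mulVec, mulVec_mulVec, ← dotProduct_add,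
        ← add_mulVec, hLyap, neg_mulVec, one_mulVec, dotProduct_neg]
    rw [← key]
    exact hsum
  -- the exponentially weighted function is antitone
  set g : ℝ → ℝ := fun t => V t * Real.exp (t / lmax) with hgdef
  have hg : ∀ t ∈ Ici (0:ℝ), HasDerivWithinAt g
      (-(x t ⬝ᵥ x t) * Real.exp (t / lmax) + V t * (Real.exp (t / lmax) * (1 / lmax)))
      (Ici 0) t := by
    intro t ht
    have hexp : HasDerivAt (fun s : ℝ => Real.exp (s / lmax)) (Real.exp (t / lmax) * (1 / lmax)) t := by
      have h1 : HasDerivAt (fun s : ℝ => s / lmax) (1 / lmax) t := by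
        simpa using (hasDerivAt_id t).div_const lmax
      simpa using h1.exp
    exact (hV t ht).mul hexp.hasDerivWithinAt
  have hg' : ∀ t ∈ Ici (0:ℝ),
      -(x t ⬝ᵥ x t) * Real.exp (t / lmax) + V t * (Real.exp (t / lmax) * (1 / lmax)) ≤ 0 := by
    intro t ht
    have h1 : V t ≤ lmax * (x t ⬝ᵥ x t) := hub (x t)
    have h2 : 0 < Real.exp (t / lmax) := Real.exp_pos _
    have h3 : V t * (1 / lmax) ≤ x t ⬝ᵥ x t := by
      rw [mul_one_div, div_le_iff₀ hlmaxpos, mul_comm]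
      exact h1
    nlinarith
  have hanti : AntitoneOn g (Ici (0:ℝ)) := by
    apply antitoneOn_of_deriv_nonpos (convex_Ici 0)
    · exact fun t ht => (hg t ht).continuousWithinAt
    · intro t ht
      rw [interior_Ici] at ht
      exact (((hg t (mem_Ici.mpr (le_of_lt ht))).hasDerivAt (Ici_mem_nhds ht)).differentiableAt).differentiableWithinAt
    · intro t ht
      rw [interior_Ici] at ht
      rw [((hg t (mem_Ici.mpr (le_of_lt ht))).hasDerivAt (Ici_mem_nhds ht)).deriv]
      exact hg' t (mem_Ici.mpr (le_of_lt ht))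
  -- conclude
  intro t ht
  have hgle : g t ≤ g 0 := hanti self_mem_Ici ht ht
  have hg0 : g 0 = V 0 := by simp [hgdef]
  have hVt : lmin * (x t ⬝ᵥ x t) ≤ V t := hlb (x t)
  have hV0 : V 0 ≤ lmax * (x 0 ⬝ᵥ x 0) := hub (x 0)
  have hE : Real.exp (t / lmax) * Real.exp (-(t / lmax)) = 1 := by
    rw [← Real.exp_add]; simp
  have hEpos : 0 < Real.exp (-(t / lmax)) := Real.exp_pos _
  have hE'pos : 0 < Real.exp (t / lmax) := Real.exp_pos _
  have hsq : ∀ s : ℝ, (∑ i, (x s i) ^ 2) = x s ⬝ᵥ x s := by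
    intro s; simp [dotProduct, sq]
  rw [hsq t, hsq 0]
  -- V t ≤ V 0 * exp(-(t/lmax))
  have hVdec : V t ≤ V 0 * Real.exp (-(t / lmax)) := by
    have h4 : V t * Real.exp (t / lmax) ≤ V 0 := by rw [← hg0]; exact hgle
    have h5 := mul_le_mul_of_nonneg_right h4 hEpos.le
    calc V t = V t * (Real.exp (t / lmax) * Real.exp (-(t / lmax))) := by rw [hE, mul_one]
      _ = V t * Real.exp (t / lmax) * Real.exp (-(t / lmax)) := by ring
      _ ≤ V 0 * Real.exp (-(t / lmax)) := h5
  rw [div_mul_eq_mul_div, div_mul_eq_mul_div, le_div_iff₀ hlminpos]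
  nlinarith [mul_le_mul_of_nonneg_right hV0 hEpos.le]
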